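/- Let α, β ∈ ℝ. For every finitely supported function u : ℕ₀ → ℝ with u(0) = 0 one has ∑_{n=1}^∞ |u(n) − u(n−1)|² n^α ≥ ∑_{n=1}^∞ w_{α,β}(n) |u(n)|², where w_{α,β}(n) := n^α [ 1 + (1 + 1/n)^α − (1 − 1/n)^β − (1 + 1/n)^{α+β} ] for n ≥ 2 and w_{α,β}(1) := 1 + 2^α − 2^{α+β}. -/

import Mathlib

open Finset

private lemma key_sq (t s a b : ℝ) (ht : 0 < t) (hst : t * s = 1) :
    (1 - t) * a ^ 2 + (1 - s) * b ^ 2 ≤ (a - b) ^ 2 := by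
  nlinarith [sq_nonneg (t * a - b), sq_nonneg b, ht, hst]

/-- Theorem 2.1: two-parameter family of discrete weighted Hardy inequalities. -/
theorem discrete_weighted_hardy_two_param (α β : ℝ) (w : ℕ → ℝ)
    (hw1 : w 1 = 1 + (2 : ℝ) ^ α - (2 : ℝ) ^ (α + β))
    (hw : ∀ n : ℕ, 2 ≤ n → w n =
      (n : ℝ) ^ α * (1 + (1 + 1 / (n : ℝ)) ^ α - (1 - 1 / (n : ℝ)) ^ β
        - (1 + 1 / (n : ℝ)) ^ (α + β)))
    (u : ℕ → ℝ) (hsupp : ∃ N : ℕ, ∀ n ≥ N, u n = 0) (h0 : u 0 = 0) :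
    ∑' n : ℕ, |u (n + 1) - u n| ^ 2 * ((n : ℝ) + 1) ^ α ≥
      ∑' n : ℕ, w (n + 1) * |u (n + 1)| ^ 2 := by
  obtain ⟨N, hN⟩ := hsupp
  -- the key induction claim with boundary term E M
  have claim : ∀ M : ℕ,
      (∑ n ∈ range M, w (n + 1) * |u (n + 1)| ^ 2)
        + ((M : ℝ) + 1) ^ α * (((M : ℝ) + 1) ^ β / (M : ℝ) ^ β - 1) * u M ^ 2
      ≤ ∑ n ∈ range M, |u (n + 1) - u n| ^ 2 * ((n : ℝ) + 1) ^ α := by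
    intro M
    induction M with
    | zero => simp [h0]
    | succ M ih =>
      rw [sum_range_succ, sum_range_succ]
      have hstep :
          w (M + 1) * |u (M + 1)| ^ 2
            + (((M : ℕ) + 1 : ℕ) + 1 : ℝ) ^ α
              * (((((M : ℕ) + 1 : ℕ) : ℝ) + 1) ^ β / (((M : ℕ) + 1 : ℕ) : ℝ) ^ β - 1)
              * u (M + 1) ^ 2
          ≤ |u (M + 1) - u M| ^ 2 * ((M : ℝ) + 1) ^ α
            + ((M : ℝ) + 1) ^ α * (((M : ℝ) + 1) ^ β / (M : ℝ) ^ β - 1) * u M ^ 2 := by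
        rcases Nat.eq_zero_or_pos M with hM | hM
        · subst hM
          have h2 : ((2 : ℝ)) ^ (α + β) = 2 ^ α * 2 ^ β :=
            Real.rpow_add (by norm_num) α β
          rw [sq_abs, sq_abs]
          push_cast
          rw [hw1, h0]
          simp only [Real.one_rpow]
          norm_num
          nlinarith [h2]
        · -- M ≥ 1
          have hx : (0 : ℝ) < (M : ℝ) := by exact_mod_cast hM
          set x : ℝ := (M : ℝ) with hxdef
          have hy : (0 : ℝ) < x + 1 := by linarith
          have hy2 : (0 : ℝ) < x + 2 := by linarith
          have hxb : (0 : ℝ) < x ^ β := Real.rpow_pos_of_pos hx β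
          have hyb : (0 : ℝ) < (x + 1) ^ β := Real.rpow_pos_of_pos hy β
          have hy2b : (0 : ℝ) < (x + 2) ^ β := Real.rpow_pos_of_pos hy2 β
          have hya : (0 : ℝ) < (x + 1) ^ α := Real.rpow_pos_of_pos hy α
          -- rewrite w (M+1)
          have hw' : w (M + 1) = (x + 1) ^ α + (x + 2) ^ α
              - (x + 1) ^ α * x ^ β / (x + 1) ^ β
              - (x + 2) ^ α * (x + 2) ^ β / (x + 1) ^ β := by
            rw [hw (M + 1) (by omega)]
            have hc : ((M + 1 : ℕ) : ℝ) = x + 1 := by push_cast; ring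
            rw [hc]
            have e0 : 1 + 1 / (x + 1) = (x + 2) / (x + 1) := by field_simp; ring
            have e0' : 1 - 1 / (x + 1) = x / (x + 1) := by field_simp; ring
            rw [e0, e0']
            rw [Real.div_rpow hy2.le hy.le, Real.div_rpow hx.le hy.le,
              Real.div_rpow hy2.le hy.le]
            rw [Real.rpow_add hy2, Real.rpow_add hy]
            have hyane : (x + 1) ^ α ≠ 0 := ne_of_gt hya
            have hybne : (x + 1) ^ β ≠ 0 := ne_of_gt hyb
            field_simp
          have hcast1 : (((M : ℕ) + 1 : ℕ) + 1 : ℝ) = x + 2 := by push_cast; ring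
          have hcast2 : ((((M : ℕ) + 1 : ℕ) : ℝ) + 1) = x + 2 := by push_cast; ring
          have hcast3 : (((M : ℕ) + 1 : ℕ) : ℝ) = x + 1 := by push_cast; ring
          rw [hcast1, hcast3, sq_abs, sq_abs, hw']
          have hst : (x ^ β / (x + 1) ^ β) * ((x + 1) ^ β / x ^ β) = 1 := by
            field_simp
          have hk := key_sq (x ^ β / (x + 1) ^ β) ((x + 1) ^ β / x ^ β)
            (u (M + 1)) (u M) (div_pos hxb hyb) hst
          have hk2 := mul_le_mul_of_nonneg_left hk hya.le
          have e1 : (x + 1) ^ α * ((1 - x ^ β / (x + 1) ^ β) * u (M + 1) ^ 2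
                + (1 - (x + 1) ^ β / x ^ β) * u M ^ 2)
              = ((x + 1) ^ α + (x + 2) ^ α - (x + 1) ^ α * x ^ β / (x + 1) ^ β
                  - (x + 2) ^ α * (x + 2) ^ β / (x + 1) ^ β) * u (M + 1) ^ 2
                + (x + 2) ^ α * ((x + 2) ^ β / (x + 1) ^ β - 1) * u (M + 1) ^ 2
                - (x + 1) ^ α * ((x + 1) ^ β / x ^ β - 1) * u M ^ 2 := by ring
          have e2 : (x + 1) ^ α * (u (M + 1) - u M) ^ 2
              = (u (M + 1) - u M) ^ 2 * (x + 1) ^ α := by ring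
          linarith [hk2, e1, e2]
      linarith
  -- reduce tsums to finite sums
  have hL : ∑' n : ℕ, |u (n + 1) - u n| ^ 2 * ((n : ℝ) + 1) ^ α
      = ∑ n ∈ range N, |u (n + 1) - u n| ^ 2 * ((n : ℝ) + 1) ^ α := by
    apply tsum_eq_sum
    intro n hn
    have hn' : N ≤ n := by simpa using hn
    rw [hN n hn', hN (n + 1) (by omega)]
    simp
  have hR : ∑' n : ℕ, w (n + 1) * |u (n + 1)| ^ 2
      = ∑ n ∈ range N, w (n + 1) * |u (n + 1)| ^ 2 := by
    apply tsum_eq_sum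
    intro n hn
    have hn' : N ≤ n := by simpa using hn
    rw [hN (n + 1) (by omega)]
    simp
  rw [hL, hR, ge_iff_le]
  have hEN : u N = 0 := hN N le_rfl
  have := claim N
  rw [hEN] at this
  simpa using this
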